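/- Let α, β, δ, h be positive reals satisfying (i) 1 + αδ > δ and (ii) δ(2+αδ) < (1+αδ)²(1+βδ). If h > G_E/H_E, then det(J_E) > 1, and consequently at least one complex root of λ² − trace(J_E)·λ + det(J_E) has modulus strictly greater than 1; i.e., the interior fixed point E* of the Euler discrete system is unstable when the step-size restriction is violated. -/

import Mathlib

/-- Under the existence and stability conditions of the
continuous model, if h > G_E/H_E then det(J_E) > 1, and consequently at least
one complex root of λ² − trace(J_E)λ + det(J_E) has modulus strictly greater
than 1: the interior fixed point E* of the Euler discrete system is unstable
when the step-size restriction is violated. -/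
theorem stmt_17 (α β δ h : ℝ) (hα : 0 < α) (hβ : 0 < β) (hδ : 0 < δ) (hh : 0 < h)
    (h1 : 1 + α * δ > δ)
    (h2 : δ * (2 + α * δ) < (1 + α * δ) ^ 2 * (1 + β * δ))
    (Nstar Pstar GE HE : ℝ)
    (hN : Nstar = (1 + α * δ - δ) / (1 + α * δ))
    (hP : Pstar = δ * Nstar)
    (hGE : GE = (1 + α * δ) ^ 2 * (1 + β * δ) - δ * (2 + α * δ))
    (hHE : HE = β * δ * (1 + α * δ - δ) * (1 + α * δ))
    (hstep : h > GE / HE)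
    (J : Matrix (Fin 2) (Fin 2) ℝ)
    (hJ : J = !![1 - h * Nstar * (1 - Pstar / (Nstar + α * Pstar) ^ 2),
                 -(h * (Nstar / (Nstar + α * Pstar)) ^ 2);
                 h * β * (Pstar / Nstar) ^ 2,
                 1 - h * β * Pstar / Nstar]) :
    J.det > 1 ∧
      ∃ z : ℂ, z ^ 2 - ((Matrix.trace J : ℝ) : ℂ) * z + ((J.det : ℝ) : ℂ) = 0 ∧
        ‖z‖ > 1 := by
  have hs : (0:ℝ) < 1 + α * δ := by positivity
  have hsd : (0:ℝ) < 1 + α * δ - δ := by linarith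
  have hHEpos : 0 < HE := by rw [hHE]; positivity
  have hkey : GE < h * HE := (div_lt_iff₀ hHEpos).mp hstep
  have hdet : J.det > 1 := by
    rw [hJ, Matrix.det_fin_two_of]
    have heq : (1 - h * Nstar * (1 - Pstar / (Nstar + α * Pstar) ^ 2)) *
        (1 - h * β * Pstar / Nstar) -
        -(h * (Nstar / (Nstar + α * Pstar)) ^ 2) * (h * β * (Pstar / Nstar) ^ 2) - 1
        = h * (h * HE - GE) / (1 + α * δ) ^ 2 := by
      subst hP hN hGE hHE
      have hne : (1 + α * δ) ≠ 0 := ne_of_gt hs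
      have hne2 : (1 + α * δ - δ) ≠ 0 := ne_of_gt hsd
      field_simp
      ring
    have hpos : 0 < h * (h * HE - GE) / (1 + α * δ) ^ 2 := by
      apply div_pos (mul_pos hh (by linarith)) (by positivity)
    linarith
  refine ⟨hdet, ?_⟩
  set T : ℂ := ((Matrix.trace J : ℝ) : ℂ)
  set D : ℂ := ((J.det : ℝ) : ℂ)
  obtain ⟨w, hw⟩ := IsAlgClosed.exists_pow_nat_eq (T ^ 2 - 4 * D) (n := 2) (by norm_num)
  set z1 : ℂ := (T + w) / 2
  set z2 : ℂ := (T - w) / 2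
  have hz1 : z1 ^ 2 - T * z1 + D = 0 := by
    simp only [z1]; linear_combination (1/4 : ℂ) * hw
  have hz2 : z2 ^ 2 - T * z2 + D = 0 := by
    simp only [z2]; linear_combination (1/4 : ℂ) * hw
  have hprod : z1 * z2 = D := by
    simp only [z1, z2]; linear_combination (-1/4 : ℂ) * hw
  have habs : ‖z1‖ * ‖z2‖ > 1 := by
    rw [← norm_mul, hprod]
    simpa [D, Complex.norm_real, Real.norm_eq_abs, abs_of_pos (lt_trans one_pos hdet)] using hdet
  by_cases hc : ‖z1‖ > 1
  · exact ⟨z1, hz1, hc⟩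
  · refine ⟨z2, hz2, ?_⟩
    push_neg at hc
    nlinarith [norm_nonneg z2]
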